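/- Let C(u_1,u_2) = ∑_{h_1=0}^{l_1} ∑_{h_2=0}^{l_2} η_{h_1,h_2} P_{l_1,h_1}(u_1) P_{l_2,h_2}(u_2) be a polynomial in Bernstein form on [0,1]^2 with density c(u_1,u_2) = ∂²C/∂u_1∂u_2. Then the Kendall functional 4∫_0^1∫_0^1 C(u_1,u_2) c(u_1,u_2) du_1 du_2 − 1 equals 4 ∑_{h_1=0}^{l_1} ∑_{h_2=0}^{l_2} ∑_{g_1=0}^{l_1−1} ∑_{g_2=0}^{l_2−1} η_{h_1,h_2} (η_{g_1+1,g_2+1} − η_{g_1+1,g_2} − η_{g_1,g_2+1} + η_{g_1,g_2}) · ∏_{s=1}^2 l_s C(l_s,h_s) C(l_s−1,g_s) B(h_s+g_s+1, 2l_s−h_s−g_s) − 1, where B is the Beta function. -/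

import Mathlib

/-- Bernstein basis polynomial `P_{l,h}(u) = C(l,h) u^h (1-u)^{l-h}`. -/
noncomputable def bern (l h : ℕ) (u : ℝ) : ℝ := (l.choose h : ℝ) * u ^ h * (1 - u) ^ (l - h)

/-- The Beta function `B(a,b) = ∫_0^1 t^(a-1) (1-t)^(b-1) dt`. -/
noncomputable def betaFn (a b : ℝ) : ℝ := ∫ t in (0:ℝ)..1, t ^ (a - 1) * (1 - t) ^ (b - 1)

/-- A bivariate polynomial in Bernstein form. -/
noncomputable def bernForm (l₁ l₂ : ℕ) (η : ℕ → ℕ → ℝ) (u₁ u₂ : ℝ) : ℝ :=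
  ∑ h₁ ∈ Finset.range (l₁ + 1), ∑ h₂ ∈ Finset.range (l₂ + 1),
    η h₁ h₂ * bern l₁ h₁ u₁ * bern l₂ h₂ u₂

lemma bern_cont (l h : ℕ) : Continuous (bern l h) := by unfold bern; continuity

/-- Derivative expression of a Bernstein basis polynomial. -/
noncomputable def dbern (l h : ℕ) (u : ℝ) : ℝ :=
  (h : ℝ) * l.choose h * u ^ (h - 1) * (1 - u) ^ (l - h)
    - ((l - h : ℕ) : ℝ) * l.choose h * u ^ h * (1 - u) ^ (l - h - 1)

lemma hasDerivAt_bern (l h : ℕ) (u : ℝ) : HasDerivAt (bern l h) (dbern l h u) u := by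
  have h1 : HasDerivAt (fun u : ℝ => (1 - u)) (-1) u := by
    exact (hasDerivAt_id' u).const_sub 1
  have h2 : HasDerivAt (fun u : ℝ => (1 - u) ^ (l - h))
      (((l - h : ℕ) : ℝ) * (1 - u) ^ (l - h - 1) * (-1)) u := h1.pow _
  have h3 := (hasDerivAt_pow h u).mul h2
  have h4 := h3.const_mul ((l.choose h : ℝ))
  have e : bern l h = fun u : ℝ => (l.choose h : ℝ) * (u ^ h * (1 - u) ^ (l - h)) := by
    funext x; unfold bern; ring
  rw [e]
  refine h4.congr_deriv ?_
  unfold dbern; ring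

lemma choose_id1 (l g : ℕ) (hl : 1 ≤ l) : (g + 1) * l.choose (g + 1) = l * (l - 1).choose g := by
  have h := Nat.add_one_mul_choose_eq (l - 1) g
  rw [Nat.sub_add_cancel hl] at h
  rw [mul_comm]; exact h.symm

lemma choose_id2 (l g : ℕ) (hl : 1 ≤ l) : (l - g) * l.choose g = l * (l - 1).choose g := by
  have h2 := Nat.choose_succ_right_eq l g
  have h1 := choose_id1 l g hl
  calc (l - g) * l.choose g = l.choose (g + 1) * (g + 1) := by rw [h2]; ring
    _ = l * (l - 1).choose g := by rw [mul_comm]; exact h1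

lemma sum_dbern (l : ℕ) (hl : 1 ≤ l) (c : ℕ → ℝ) (u : ℝ) :
    ∑ h ∈ Finset.range (l + 1), c h * dbern l h u
      = (l : ℝ) * ∑ g ∈ Finset.range l, (c (g + 1) - c g) * bern (l - 1) g u := by
  have expand : ∀ h, c h * dbern l h u
      = c h * ((h : ℝ) * l.choose h * u ^ (h - 1) * (1 - u) ^ (l - h))
        - c h * (((l - h : ℕ) : ℝ) * l.choose h * u ^ h * (1 - u) ^ (l - h - 1)) := by
    intro h; unfold dbern; ring
  simp only [expand, Finset.sum_sub_distrib]
  rw [Finset.sum_range_succ' (fun h => c h * ((h : ℝ) * l.choose h * u ^ (h - 1) * (1 - u) ^ (l - h))) l]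
  rw [Finset.sum_range_succ (fun h => c h * (((l - h : ℕ) : ℝ) * l.choose h * u ^ h * (1 - u) ^ (l - h - 1))) l]
  simp only [Nat.cast_zero, Nat.sub_self, zero_mul, mul_zero, add_zero]
  rw [Finset.mul_sum, ← Finset.sum_sub_distrib]
  refine Finset.sum_congr rfl fun g hg => ?_
  have hgl : g < l := Finset.mem_range.mp hg
  have e1 : ((g + 1 : ℕ) : ℝ) * (l.choose (g + 1) : ℝ) = (l : ℝ) * ((l - 1).choose g : ℝ) := by
    exact_mod_cast congrArg (Nat.cast : ℕ → ℝ) (choose_id1 l g hl)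
  have e2 : ((l - g : ℕ) : ℝ) * (l.choose g : ℝ) = (l : ℝ) * ((l - 1).choose g : ℝ) := by
    exact_mod_cast congrArg (Nat.cast : ℕ → ℝ) (choose_id2 l g hl)
  have ex1 : l - (g + 1) = l - 1 - g := by omega
  have ex2 : l - g - 1 = l - 1 - g := by omega
  have ex3 : g + 1 - 1 = g := by omega
  unfold bern
  rw [ex1, ex2, ex3]
  push_cast at e1 e2 ⊢
  linear_combination (c (g + 1) * u ^ g * (1 - u) ^ (l - 1 - g)) * e1
    - (c g * u ^ g * (1 - u) ^ (l - 1 - g)) * e2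

lemma inner_deriv (l₁ l₂ : ℕ) (η : ℕ → ℕ → ℝ) (a u₂ : ℝ) :
    deriv (fun b => bernForm l₁ l₂ η a b) u₂
      = ∑ h₁ ∈ Finset.range (l₁ + 1), ∑ h₂ ∈ Finset.range (l₂ + 1),
          η h₁ h₂ * bern l₁ h₁ a * dbern l₂ h₂ u₂ := by
  apply HasDerivAt.deriv
  unfold bernForm
  apply HasDerivAt.fun_sum
  intro h₁ _
  apply HasDerivAt.fun_sum
  intro h₂ _
  exact (hasDerivAt_bern l₂ h₂ u₂).const_mul (η h₁ h₂ * bern l₁ h₁ a)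

lemma outer_deriv (l₁ l₂ : ℕ) (η : ℕ → ℕ → ℝ) (u₁ u₂ : ℝ) :
    deriv (fun a => deriv (fun b => bernForm l₁ l₂ η a b) u₂) u₁
      = ∑ h₁ ∈ Finset.range (l₁ + 1), ∑ h₂ ∈ Finset.range (l₂ + 1),
          η h₁ h₂ * dbern l₁ h₁ u₁ * dbern l₂ h₂ u₂ := by
  have e : (fun a => deriv (fun b => bernForm l₁ l₂ η a b) u₂)
      = fun a => ∑ h₁ ∈ Finset.range (l₁ + 1), ∑ h₂ ∈ Finset.range (l₂ + 1),
          η h₁ h₂ * bern l₁ h₁ a * dbern l₂ h₂ u₂ := funext fun a => inner_deriv l₁ l₂ η a u₂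
  rw [e]
  apply HasDerivAt.deriv
  apply HasDerivAt.fun_sum
  intro h₁ _
  apply HasDerivAt.fun_sum
  intro h₂ _
  exact ((hasDerivAt_bern l₁ h₁ u₁).const_mul (η h₁ h₂)).mul_const (dbern l₂ h₂ u₂)

lemma bern_int (l h g : ℕ) (hl : 1 ≤ l) (hh : h ≤ l) (hg : g < l) :
    (∫ u in (0:ℝ)..1, bern l h u * bern (l - 1) g u)
      = (l.choose h : ℝ) * ((l - 1).choose g : ℝ)
          * betaFn ((h : ℝ) + g + 1) (2 * l - h - g) := by
  have e1 : ∀ t : ℝ, t ^ ((h : ℝ) + g + 1 - 1) = t ^ (h + g) := fun t => by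
    rw [show (h : ℝ) + g + 1 - 1 = ((h + g : ℕ) : ℝ) by push_cast; ring, Real.rpow_natCast]
  have e2 : ∀ t : ℝ, (1 - t) ^ (2 * (l : ℝ) - h - g - 1) = (1 - t) ^ ((l - h) + (l - 1 - g)) := fun t => by
    rw [show 2 * (l : ℝ) - h - g - 1 = (((l - h) + (l - 1 - g) : ℕ) : ℝ) by
      rw [Nat.cast_add, Nat.cast_sub hh, Nat.cast_sub (by omega : g ≤ l - 1), Nat.cast_sub hl]
      push_cast; ring, Real.rpow_natCast]
  have eβ : betaFn ((h : ℝ) + g + 1) (2 * l - h - g)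
      = ∫ t in (0:ℝ)..1, t ^ (h + g) * (1 - t) ^ ((l - h) + (l - 1 - g)) := by
    unfold betaFn
    exact intervalIntegral.integral_congr fun t _ => by rw [e1, e2]
  rw [eβ, ← intervalIntegral.integral_const_mul]
  apply intervalIntegral.integral_congr
  intro t _
  unfold bern
  simp only [pow_add]
  ring

lemma int_sum₄ (s₁ s₂ s₃ s₄ : Finset ℕ) (f : ℕ → ℕ → ℕ → ℕ → ℝ → ℝ)
    (hf : ∀ a b c d, Continuous (f a b c d)) :
    (∫ u in (0:ℝ)..1, ∑ a ∈ s₁, ∑ b ∈ s₂, ∑ c ∈ s₃, ∑ d ∈ s₄, f a b c d u)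
      = ∑ a ∈ s₁, ∑ b ∈ s₂, ∑ c ∈ s₃, ∑ d ∈ s₄, ∫ u in (0:ℝ)..1, f a b c d u := by
  have I : ∀ (g : ℕ → ℝ → ℝ) (s : Finset ℕ), (∀ a, Continuous (g a)) →
      (∫ u in (0:ℝ)..1, ∑ a ∈ s, g a u) = ∑ a ∈ s, ∫ u in (0:ℝ)..1, g a u :=
    fun g s hg => intervalIntegral.integral_finset_sum fun a _ => (hg a).intervalIntegrable _ _
  rw [I _ _ fun a => continuous_finset_sum _ fun b _ => continuous_finset_sum _ fun c _ =>
      continuous_finset_sum _ fun d _ => hf a b c d]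
  refine Finset.sum_congr rfl fun a _ => ?_
  rw [I _ _ fun b => continuous_finset_sum _ fun c _ => continuous_finset_sum _ fun d _ => hf a b c d]
  refine Finset.sum_congr rfl fun b _ => ?_
  rw [I _ _ fun c => continuous_finset_sum _ fun d _ => hf a b c d]
  refine Finset.sum_congr rfl fun c _ => ?_
  rw [I _ _ fun d => hf a b c d]

/-- Closed-form expression for the Kendall functional
`4∫∫ C·c du₁du₂ − 1` of a bivariate Bernstein-form polynomial, where
`c = ∂²C/∂u₁∂u₂`. -/
theorem kendall_functional_closed_form (l₁ l₂ : ℕ) (hl₁ : 1 ≤ l₁) (hl₂ : 1 ≤ l₂)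
    (η : ℕ → ℕ → ℝ) :
    4 * (∫ u₂ in (0:ℝ)..1, ∫ u₁ in (0:ℝ)..1,
        bernForm l₁ l₂ η u₁ u₂ *
          deriv (fun a => deriv (fun b => bernForm l₁ l₂ η a b) u₂) u₁) - 1 =
      4 * (∑ h₁ ∈ Finset.range (l₁ + 1), ∑ h₂ ∈ Finset.range (l₂ + 1),
        ∑ g₁ ∈ Finset.range l₁, ∑ g₂ ∈ Finset.range l₂,
          η h₁ h₂ *
            (η (g₁ + 1) (g₂ + 1) - η (g₁ + 1) g₂ - η g₁ (g₂ + 1) + η g₁ g₂) *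
            ((l₁ : ℝ) * (l₁.choose h₁ : ℝ) * ((l₁ - 1).choose g₁ : ℝ) *
              betaFn (h₁ + g₁ + 1) (2 * l₁ - h₁ - g₁)) *
            ((l₂ : ℝ) * (l₂.choose h₂ : ℝ) * ((l₂ - 1).choose g₂ : ℝ) *
              betaFn (h₂ + g₂ + 1) (2 * l₂ - h₂ - g₂))) - 1 := by
  set Δ : ℕ → ℕ → ℝ := fun g₁ g₂ =>
    η (g₁ + 1) (g₂ + 1) - η (g₁ + 1) g₂ - η g₁ (g₂ + 1) + η g₁ g₂ with hΔ
  -- pointwise rewriting of the integrand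
  have ptwise : ∀ u₁ u₂ : ℝ,
      bernForm l₁ l₂ η u₁ u₂ *
          deriv (fun a => deriv (fun b => bernForm l₁ l₂ η a b) u₂) u₁
        = ∑ h₁ ∈ Finset.range (l₁ + 1), ∑ h₂ ∈ Finset.range (l₂ + 1),
            ∑ g₁ ∈ Finset.range l₁, ∑ g₂ ∈ Finset.range l₂,
              (η h₁ h₂ * Δ g₁ g₂ * l₁ * l₂ * (bern l₂ h₂ u₂ * bern (l₂ - 1) g₂ u₂))
                * (bern l₁ h₁ u₁ * bern (l₁ - 1) g₁ u₁) := by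
    intro u₁ u₂
    rw [outer_deriv]
    have c_eq : (∑ h₁ ∈ Finset.range (l₁ + 1), ∑ h₂ ∈ Finset.range (l₂ + 1),
          η h₁ h₂ * dbern l₁ h₁ u₁ * dbern l₂ h₂ u₂)
        = (l₁ : ℝ) * ∑ g₁ ∈ Finset.range l₁,
            ((l₂ : ℝ) * ∑ g₂ ∈ Finset.range l₂, Δ g₁ g₂ * bern (l₂ - 1) g₂ u₂)
              * bern (l₁ - 1) g₁ u₁ := by
      have step1 : (∑ h₁ ∈ Finset.range (l₁ + 1), ∑ h₂ ∈ Finset.range (l₂ + 1),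
            η h₁ h₂ * dbern l₁ h₁ u₁ * dbern l₂ h₂ u₂)
          = ∑ h₁ ∈ Finset.range (l₁ + 1),
              (fun k => ∑ h₂ ∈ Finset.range (l₂ + 1), η k h₂ * dbern l₂ h₂ u₂) h₁
                * dbern l₁ h₁ u₁ := by
        refine Finset.sum_congr rfl fun h₁ _ => ?_
        simp only [Finset.sum_mul]
        exact Finset.sum_congr rfl fun h₂ _ => by ring
      rw [step1, sum_dbern l₁ hl₁ _ u₁]
      congr 1
      refine Finset.sum_congr rfl fun g₁ _ => ?_
      congr 1
      have diff : (∑ h₂ ∈ Finset.range (l₂ + 1), η (g₁ + 1) h₂ * dbern l₂ h₂ u₂)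
            - (∑ h₂ ∈ Finset.range (l₂ + 1), η g₁ h₂ * dbern l₂ h₂ u₂)
          = ∑ h₂ ∈ Finset.range (l₂ + 1), (η (g₁ + 1) h₂ - η g₁ h₂) * dbern l₂ h₂ u₂ := by
        rw [← Finset.sum_sub_distrib]
        exact Finset.sum_congr rfl fun h₂ _ => by ring
      rw [diff, sum_dbern l₂ hl₂ _ u₂]
      congr 1
      refine Finset.sum_congr rfl fun g₂ _ => ?_
      rw [hΔ]
      ring
    rw [c_eq]
    unfold bernForm
    rw [Finset.sum_mul]
    refine Finset.sum_congr rfl fun h₁ _ => ?_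
    rw [Finset.sum_mul]
    refine Finset.sum_congr rfl fun h₂ _ => ?_
    simp only [Finset.mul_sum, Finset.sum_mul]
    refine Finset.sum_congr rfl fun g₁ _ => Finset.sum_congr rfl fun g₂ _ => by ring
  have contP : ∀ (l h g : ℕ) (c : ℝ), Continuous (fun u : ℝ => c * (bern l h u * bern (l - 1) g u)) :=
    fun l h g c => continuous_const.mul ((bern_cont l h).mul (bern_cont (l - 1) g))
  have key : (∫ u₂ in (0:ℝ)..1, ∫ u₁ in (0:ℝ)..1,
        bernForm l₁ l₂ η u₁ u₂ *
          deriv (fun a => deriv (fun b => bernForm l₁ l₂ η a b) u₂) u₁)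
      = ∑ h₁ ∈ Finset.range (l₁ + 1), ∑ h₂ ∈ Finset.range (l₂ + 1),
          ∑ g₁ ∈ Finset.range l₁, ∑ g₂ ∈ Finset.range l₂,
            η h₁ h₂ * Δ g₁ g₂ *
              ((l₁ : ℝ) * (l₁.choose h₁ : ℝ) * ((l₁ - 1).choose g₁ : ℝ) *
                betaFn ((h₁ : ℝ) + g₁ + 1) (2 * l₁ - h₁ - g₁)) *
              ((l₂ : ℝ) * (l₂.choose h₂ : ℝ) * ((l₂ - 1).choose g₂ : ℝ) *
                betaFn ((h₂ : ℝ) + g₂ + 1) (2 * l₂ - h₂ - g₂)) := by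
    calc (∫ u₂ in (0:ℝ)..1, ∫ u₁ in (0:ℝ)..1,
            bernForm l₁ l₂ η u₁ u₂ *
              deriv (fun a => deriv (fun b => bernForm l₁ l₂ η a b) u₂) u₁)
        = ∫ u₂ in (0:ℝ)..1,
            ∑ h₁ ∈ Finset.range (l₁ + 1), ∑ h₂ ∈ Finset.range (l₂ + 1),
              ∑ g₁ ∈ Finset.range l₁, ∑ g₂ ∈ Finset.range l₂,
                (η h₁ h₂ * Δ g₁ g₂ * l₁ * l₂
                    * (∫ u₁ in (0:ℝ)..1, bern l₁ h₁ u₁ * bern (l₁ - 1) g₁ u₁))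
                  * (bern l₂ h₂ u₂ * bern (l₂ - 1) g₂ u₂) := by
          refine intervalIntegral.integral_congr fun u₂ _ => ?_
          rw [show (fun u₁ => bernForm l₁ l₂ η u₁ u₂ *
                deriv (fun a => deriv (fun b => bernForm l₁ l₂ η a b) u₂) u₁)
              = fun u₁ => ∑ h₁ ∈ Finset.range (l₁ + 1), ∑ h₂ ∈ Finset.range (l₂ + 1),
                  ∑ g₁ ∈ Finset.range l₁, ∑ g₂ ∈ Finset.range l₂,
                    (η h₁ h₂ * Δ g₁ g₂ * l₁ * l₂ * (bern l₂ h₂ u₂ * bern (l₂ - 1) g₂ u₂))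
                      * (bern l₁ h₁ u₁ * bern (l₁ - 1) g₁ u₁)
              from funext fun u₁ => ptwise u₁ u₂]
          rw [int_sum₄ _ _ _ _ _ (fun h₁ h₂ g₁ g₂ => contP l₁ h₁ g₁ _)]
          refine Finset.sum_congr rfl fun h₁ _ => Finset.sum_congr rfl fun h₂ _ =>
            Finset.sum_congr rfl fun g₁ _ => Finset.sum_congr rfl fun g₂ _ => ?_
          rw [intervalIntegral.integral_const_mul]
          ring
      _ = ∑ h₁ ∈ Finset.range (l₁ + 1), ∑ h₂ ∈ Finset.range (l₂ + 1),
            ∑ g₁ ∈ Finset.range l₁, ∑ g₂ ∈ Finset.range l₂,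
              (η h₁ h₂ * Δ g₁ g₂ * l₁ * l₂
                  * (∫ u₁ in (0:ℝ)..1, bern l₁ h₁ u₁ * bern (l₁ - 1) g₁ u₁))
                * (∫ u₂ in (0:ℝ)..1, bern l₂ h₂ u₂ * bern (l₂ - 1) g₂ u₂) := by
          rw [int_sum₄ _ _ _ _ _ (fun h₁ h₂ g₁ g₂ => contP l₂ h₂ g₂ _)]
          refine Finset.sum_congr rfl fun h₁ _ => Finset.sum_congr rfl fun h₂ _ =>
            Finset.sum_congr rfl fun g₁ _ => Finset.sum_congr rfl fun g₂ _ => ?_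
          rw [intervalIntegral.integral_const_mul]
      _ = _ := by
          refine Finset.sum_congr rfl fun h₁ hh₁ => Finset.sum_congr rfl fun h₂ hh₂ =>
            Finset.sum_congr rfl fun g₁ hg₁ => Finset.sum_congr rfl fun g₂ hg₂ => ?_
          have H1 : h₁ ≤ l₁ := by have := Finset.mem_range.mp hh₁; omega
          have H2 : h₂ ≤ l₂ := by have := Finset.mem_range.mp hh₂; omega
          rw [bern_int l₁ h₁ g₁ hl₁ H1 (Finset.mem_range.mp hg₁),
            bern_int l₂ h₂ g₂ hl₂ H2 (Finset.mem_range.mp hg₂)]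
          ring
  rw [key]
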